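/- arXiv:1602.02560 — 6 statements merged into one kernel-verified Lean document; each statement's English description precedes it below -/
import Mathlib

section
/- Let Q : ℝ⁴ → ℝ be the Minkowski quadratic form Q(x) = x₀² − x₁² − x₂² − x₃². If Γ : ℝ⁴ → ℂ is continuous, positive definite, and satisfies Γ(g x) = Γ(x) for every linear map g : ℝ⁴ → ℝ⁴ with det g = 1 and Q(g x) = Q(x) for all x ∈ ℝ⁴ (i.e. Γ is invariant under the Lorentz group SO(3,1)), then Γ is constant. -/
open scoped ComplexOrder

/-- A function `Γ : E → ℂ` is positive definite if for all finite families of points and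
complex coefficients, `∑ᵢⱼ cᵢ c̄ⱼ Γ(xᵢ - xⱼ)` is a nonnegative real number. -/
def IsPosDefFn {E : Type*} [AddCommGroup E] (Γ : E → ℂ) : Prop :=
  ∀ (n : ℕ) (x : Fin n → E) (c : Fin n → ℂ),
    0 ≤ ∑ i, ∑ j, c i * (starRingEnd ℂ) (c j) * Γ (x i - x j)

/-- The Minkowski quadratic form on `ℝ⁴`. -/
def minkowskiQ (x : Fin 4 → ℝ) : ℝ := x 0 ^ 2 - x 1 ^ 2 - x 2 ^ 2 - x 3 ^ 2

section PDLemmas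

variable {E : Type*} [AddCommGroup E] {Γ : E → ℂ}

lemma pd_zero (h : IsPosDefFn Γ) : 0 ≤ Γ 0 := by
  have := h 1 (fun _ => 0) (fun _ => 1)
  simpa using this

lemma pd_herm (h : IsPosDefFn Γ) (z : E) : Γ (-z) = (starRingEnd ℂ) (Γ z) := by
  have h0 := pd_zero h
  have him0 : (Γ 0).im = 0 := by
    simpa using (Complex.le_def.mp h0).2.symm
  have h1 := h 2 ![0, z] ![1, 1]
  have h2 := h 2 ![0, z] ![1, Complex.I]
  simp [Fin.sum_univ_two, sub_self, zero_sub, sub_zero] at h1 h2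
  have i1 : (Γ (-z)).im + (Γ z).im = 0 := by
    have := (Complex.le_def.mp h1).2
    simp [him0] at this
    linarith
  have i2 : (Γ (-z)).re = (Γ z).re := by
    have := (Complex.le_def.mp h2).2
    simp [him0, Complex.mul_im, Complex.mul_re] at this
    linarith
  apply Complex.ext <;> simp [i2]
  linarith

lemma pd_diff (h : IsPosDefFn Γ) (u v : E) (huv : Γ (u - v) = Γ 0) : Γ u = Γ v := by
  by_contra hne
  have h0 := pd_zero h
  have him0 : (Γ 0).im = 0 := by simpa using (Complex.le_def.mp h0).2.symm
  set d : ℂ := Γ u - Γ v with hd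
  have hN : 0 < Complex.normSq d := by
    rw [Complex.normSq_pos]; exact sub_ne_zero.mpr hne
  set t : ℝ := ((Γ 0).re + 1) / (2 * Complex.normSq d) with ht
  have hvu : Γ (v - u) = Γ 0 := by
    have := pd_herm h (u - v)
    rw [neg_sub] at this
    rw [this, huv, Complex.conj_eq_iff_im.mpr him0]
  have hmu : Γ (0 - u) = (starRingEnd ℂ) (Γ u) := by rw [zero_sub]; exact pd_herm h u
  have hmv : Γ (0 - v) = (starRingEnd ℂ) (Γ v) := by rw [zero_sub]; exact pd_herm h v
  have hs := h 3 ![0, u, v] ![1, -(t:ℂ) * (starRingEnd ℂ) d, (t:ℂ) * (starRingEnd ℂ) d]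
  simp only [Fin.sum_univ_three, Matrix.cons_val_zero, Matrix.cons_val_one, Matrix.head_cons,
    Matrix.cons_val_two, Matrix.tail_cons, sub_self, sub_zero, map_one, map_mul, map_neg,
    Complex.conj_conj, Complex.conj_ofReal, one_mul, mul_one] at hs
  rw [hmu, hmv, huv, hvu] at hs
  have hkey : Γ 0 + -(t:ℂ) * d * (starRingEnd ℂ) (Γ u) + (t:ℂ) * d * (starRingEnd ℂ) (Γ v) +
        (-(t:ℂ) * (starRingEnd ℂ) d * Γ u + -(t:ℂ) * (starRingEnd ℂ) d * (-(t:ℂ) * d) * Γ 0 +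
          -(t:ℂ) * (starRingEnd ℂ) d * ((t:ℂ) * d) * Γ 0) +
      ((t:ℂ) * (starRingEnd ℂ) d * Γ v + (t:ℂ) * (starRingEnd ℂ) d * (-(t:ℂ) * d) * Γ 0 +
        (t:ℂ) * (starRingEnd ℂ) d * ((t:ℂ) * d) * Γ 0)
      = Γ 0 - 2 * (t:ℂ) * (d * (starRingEnd ℂ) d) := by
    rw [hd, map_sub]
    ring
  rw [hkey, Complex.mul_conj] at hs
  have hre := (Complex.le_def.mp hs).1
  simp [Complex.sub_re, Complex.mul_re, Complex.ofReal_re, Complex.ofReal_im, him0] at hre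
  have htN : t * Complex.normSq d = ((Γ 0).re + 1) / 2 := by
    rw [ht]; field_simp
  nlinarith [hre, htN]

/-- If `Γ u = Γ 0` and `Γ v = Γ 0` then `Γ (u - v) = Γ 0`. -/
lemma pd_sub (h : IsPosDefFn Γ) (u v : E) (hu : Γ u = Γ 0) (hv : Γ v = Γ 0) :
    Γ (u - v) = Γ 0 := by
  have h1 : Γ (u - (u - v)) = Γ 0 := by rwa [sub_sub_cancel]
  have h2 := pd_diff h u (u - v) h1
  rw [← h2, hu]

end PDLemmas

section Boosts

noncomputable def boostB1 (s : ℝ) : Matrix (Fin 4) (Fin 4) ℝ :=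
  !![Real.cosh s, -Real.sinh s, 0, 0; -Real.sinh s, Real.cosh s, 0, 0;
     0, 0, 1, 0; 0, 0, 0, 1]

noncomputable def boostB2 (s : ℝ) : Matrix (Fin 4) (Fin 4) ℝ :=
  !![Real.cosh s, 0, -Real.sinh s, 0; 0, 1, 0, 0;
     -Real.sinh s, 0, Real.cosh s, 0; 0, 0, 0, 1]

noncomputable def boostB3 (s : ℝ) : Matrix (Fin 4) (Fin 4) ℝ :=
  !![Real.cosh s, 0, 0, -Real.sinh s; 0, 1, 0, 0;
     0, 0, 1, 0; -Real.sinh s, 0, 0, Real.cosh s]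

lemma boostB1_det (s : ℝ) : (boostB1 s).det = 1 := by
  simp [boostB1, Matrix.det_succ_row_zero, Fin.sum_univ_succ, Fin.succAbove]
  nlinarith [Real.cosh_sq_sub_sinh_sq s]

lemma boostB2_det (s : ℝ) : (boostB2 s).det = 1 := by
  simp [boostB2, Matrix.det_succ_row_zero, Fin.sum_univ_succ, Fin.succAbove]
  nlinarith [Real.cosh_sq_sub_sinh_sq s]

lemma boostB3_det (s : ℝ) : (boostB3 s).det = 1 := by
  simp [boostB3, Matrix.det_succ_row_zero, Fin.sum_univ_succ, Fin.succAbove]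
  nlinarith [Real.cosh_sq_sub_sinh_sq s]

lemma boostB1_Q (s : ℝ) (x : Fin 4 → ℝ) :
    minkowskiQ ((boostB1 s).mulVec x) = minkowskiQ x := by
  simp [boostB1, minkowskiQ, Matrix.mulVec, dotProduct, Fin.sum_univ_four]
  nlinarith [Real.cosh_sq_sub_sinh_sq s]

lemma boostB2_Q (s : ℝ) (x : Fin 4 → ℝ) :
    minkowskiQ ((boostB2 s).mulVec x) = minkowskiQ x := by
  simp [boostB2, minkowskiQ, Matrix.mulVec, dotProduct, Fin.sum_univ_four]
  nlinarith [Real.cosh_sq_sub_sinh_sq s]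

lemma boostB3_Q (s : ℝ) (x : Fin 4 → ℝ) :
    minkowskiQ ((boostB3 s).mulVec x) = minkowskiQ x := by
  simp [boostB3, minkowskiQ, Matrix.mulVec, dotProduct, Fin.sum_univ_four]
  nlinarith [Real.cosh_sq_sub_sinh_sq s]

lemma boostB1_act (s r ε : ℝ) (hε : ε = 1 ∨ ε = -1) :
    (boostB1 (-ε * s)).mulVec ![r, ε * r, 0, 0] = Real.exp s • ![r, ε * r, 0, 0] := by
  funext i
  rcases hε with h | h <;> subst h <;> fin_cases i <;>
    simp [boostB1, Matrix.mulVec, dotProduct, Fin.sum_univ_four, Real.cosh_eq,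
      Real.sinh_eq, Real.exp_neg] <;>
    field_simp <;> ring

lemma boostB2_act (s r ε : ℝ) (hε : ε = 1 ∨ ε = -1) :
    (boostB2 (-ε * s)).mulVec ![r, 0, ε * r, 0] = Real.exp s • ![r, 0, ε * r, 0] := by
  funext i
  rcases hε with h | h <;> subst h <;> fin_cases i <;>
    simp [boostB2, Matrix.mulVec, dotProduct, Fin.sum_univ_four, Real.cosh_eq,
      Real.sinh_eq, Real.exp_neg] <;>
    field_simp <;> ring

lemma boostB3_act (s r ε : ℝ) (hε : ε = 1 ∨ ε = -1) :
    (boostB3 (-ε * s)).mulVec ![r, 0, 0, ε * r] = Real.exp s • ![r, 0, 0, ε * r] := by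
  funext i
  rcases hε with h | h <;> subst h <;> fin_cases i <;>
    simp [boostB3, Matrix.mulVec, dotProduct, Fin.sum_univ_four, Real.cosh_eq,
      Real.sinh_eq, Real.exp_neg] <;>
    field_simp <;> ring

end Boosts

/-- If `Γ` is continuous and `Γ (exp s • v) = Γ v` for all `s`, then `Γ v = Γ 0`. -/
lemma scale_inv_const {Γ : (Fin 4 → ℝ) → ℂ} (hc : Continuous Γ) (v : Fin 4 → ℝ)
    (h : ∀ s : ℝ, Γ (Real.exp s • v) = Γ v) : Γ v = Γ 0 := by
  have hexp : Filter.Tendsto (fun n : ℕ => Real.exp (-(n : ℝ))) Filter.atTop (nhds 0) :=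
    Real.tendsto_exp_atBot.comp
      (Filter.tendsto_neg_atBot_iff.mpr tendsto_natCast_atTop_atTop)
  have h1 : Filter.Tendsto (fun n : ℕ => Real.exp (-(n : ℝ)) • v) Filter.atTop (nhds 0) := by
    simpa using hexp.smul_const v
  have h2 : Filter.Tendsto (fun n : ℕ => Γ (Real.exp (-(n : ℝ)) • v)) Filter.atTop
      (nhds (Γ 0)) := (hc.tendsto 0).comp h1
  have h3 : (fun n : ℕ => Γ (Real.exp (-(n : ℝ)) • v)) = fun _ => Γ v :=
    funext fun n => h _
  rw [h3] at h2
  exact tendsto_nhds_unique tendsto_const_nhds h2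

/-- **Corollary 3.1 (analytic form).** A continuous positive definite function on `ℝ⁴` which is
invariant under the Lorentz group `SO(3,1)` is constant. -/
theorem lorentz_invariant_posdef_is_constant
    (Γ : (Fin 4 → ℝ) → ℂ) (hΓcont : Continuous Γ) (hΓpd : IsPosDefFn Γ)
    (hΓinv : ∀ g : (Fin 4 → ℝ) →ₗ[ℝ] (Fin 4 → ℝ), LinearMap.det g = 1 →
      (∀ x, minkowskiQ (g x) = minkowskiQ x) → ∀ x, Γ (g x) = Γ x) :
    ∀ x y : Fin 4 → ℝ, Γ x = Γ y := by
  -- light-cone vectors in coordinate planes have value `Γ 0`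
  have K1 : ∀ (r ε : ℝ), (ε = 1 ∨ ε = -1) → Γ ![r, ε * r, 0, 0] = Γ 0 := by
    intro r ε hε
    apply scale_inv_const hΓcont
    intro s
    have hinv := hΓinv (Matrix.toLin' (boostB1 (-ε * s)))
      (by rw [LinearMap.det_toLin']; exact boostB1_det _)
      (fun x => by rw [Matrix.toLin'_apply]; exact boostB1_Q _ _) ![r, ε * r, 0, 0]
    rw [Matrix.toLin'_apply, boostB1_act s r ε hε] at hinv
    exact hinv
  have K2 : ∀ (r ε : ℝ), (ε = 1 ∨ ε = -1) → Γ ![r, 0, ε * r, 0] = Γ 0 := by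
    intro r ε hε
    apply scale_inv_const hΓcont
    intro s
    have hinv := hΓinv (Matrix.toLin' (boostB2 (-ε * s)))
      (by rw [LinearMap.det_toLin']; exact boostB2_det _)
      (fun x => by rw [Matrix.toLin'_apply]; exact boostB2_Q _ _) ![r, 0, ε * r, 0]
    rw [Matrix.toLin'_apply, boostB2_act s r ε hε] at hinv
    exact hinv
  have K3 : ∀ (r ε : ℝ), (ε = 1 ∨ ε = -1) → Γ ![r, 0, 0, ε * r] = Γ 0 := by
    intro r ε hε
    apply scale_inv_const hΓcont
    intro s
    have hinv := hΓinv (Matrix.toLin' (boostB3 (-ε * s)))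
      (by rw [LinearMap.det_toLin']; exact boostB3_det _)
      (fun x => by rw [Matrix.toLin'_apply]; exact boostB3_Q _ _) ![r, 0, 0, ε * r]
    rw [Matrix.toLin'_apply, boostB3_act s r ε hε] at hinv
    exact hinv
  -- coordinate planes containing `e₀` have value `Γ 0`
  have P1 : ∀ a b : ℝ, Γ ![a, b, 0, 0] = Γ 0 := by
    intro a b
    have h1 := K1 ((a + b) / 2) 1 (Or.inl rfl)
    have h2 := K1 ((b - a) / 2) (-1) (Or.inr rfl)
    have h3 := pd_sub hΓpd _ _ h1 h2
    have e : (![(a + b) / 2, 1 * ((a + b) / 2), 0, 0] - ![(b - a) / 2, -1 * ((b - a) / 2), 0, 0])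
        = ![a, b, 0, 0] := by
      funext i; fin_cases i <;> simp <;> ring
    rwa [e] at h3
  have P2 : ∀ a b : ℝ, Γ ![a, 0, b, 0] = Γ 0 := by
    intro a b
    have h1 := K2 ((a + b) / 2) 1 (Or.inl rfl)
    have h2 := K2 ((b - a) / 2) (-1) (Or.inr rfl)
    have h3 := pd_sub hΓpd _ _ h1 h2
    have e : (![(a + b) / 2, 0, 1 * ((a + b) / 2), 0] - ![(b - a) / 2, 0, -1 * ((b - a) / 2), 0])
        = ![a, 0, b, 0] := by
      funext i; fin_cases i <;> simp <;> ring
    rwa [e] at h3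
  have P3 : ∀ a b : ℝ, Γ ![a, 0, 0, b] = Γ 0 := by
    intro a b
    have h1 := K3 ((a + b) / 2) 1 (Or.inl rfl)
    have h2 := K3 ((b - a) / 2) (-1) (Or.inr rfl)
    have h3 := pd_sub hΓpd _ _ h1 h2
    have e : (![(a + b) / 2, 0, 0, 1 * ((a + b) / 2)] - ![(b - a) / 2, 0, 0, -1 * ((b - a) / 2)])
        = ![a, 0, 0, b] := by
      funext i; fin_cases i <;> simp <;> ring
    rwa [e] at h3
  -- every point has value `Γ 0`
  have hK : ∀ x : Fin 4 → ℝ, Γ x = Γ 0 := by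
    intro x
    have h1 := P1 (x 0) (x 1)
    have h2 := P2 0 (-(x 2))
    have h3 := P3 0 (x 3)
    have h4 := pd_sub hΓpd _ _ h2 h3
    have h5 := pd_sub hΓpd _ _ h1 h4
    have e : (![x 0, x 1, 0, 0] - (![0, 0, -(x 2), 0] - ![0, 0, 0, x 3])) = x := by
      funext i; fin_cases i <;> simp
    rwa [e] at h5
  intro x y
  rw [hK x, hK y]
end

section
/- Let Q : ℝ⁴ → ℝ be the Minkowski quadratic form Q(x) = x₀² − x₁² − x₂² − x₃², and let the Poincaré group be the group of affine maps x ↦ g x + b of ℝ⁴ with g linear, det g = 1, and Q ∘ g = Q. Let Φ = (Φ(x))_{x∈ℝ⁴} be a standard real-valued Gaussian random field on ℝ⁴ with almost surely continuous sample paths, whose finite-dimensional distributions are invariant under the Poincaré group. Then Φ is trivial as a spatial field: for every x ∈ ℝ⁴, Φ(x) = Φ(0) almost surely. -/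
open MeasureTheory ProbabilityTheory
open scoped NNReal

section AuxPoincare

open Filter Topology

lemma aux_b1 (t : ℝ) (ht : t ≠ 0) :
    ∃ g : (Fin 4 → ℝ) →ₗ[ℝ] (Fin 4 → ℝ),
      LinearMap.det g = 1 ∧ (∀ x, minkowskiQ (g x) = minkowskiQ x) ∧
      (∀ a : ℝ, g ![a, a, 0, 0] = t • ![a, a, 0, 0]) ∧
      (∀ b : ℝ, g ![b, -b, 0, 0] = t⁻¹ • ![b, -b, 0, 0]) := by
  obtain ⟨c, hc⟩ : ∃ c : ℝ, c = (t + t⁻¹)/2 := ⟨_, rfl⟩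
  obtain ⟨s, hs⟩ : ∃ s : ℝ, s = (t - t⁻¹)/2 := ⟨_, rfl⟩
  have hcs : c^2 - s^2 = 1 := by rw [hc, hs]; field_simp; ring
  have hadd : c + s = t := by rw [hc, hs]; field_simp; ring
  have hsub : c - s = t⁻¹ := by rw [hc, hs]; field_simp; ring
  refine ⟨Matrix.toLin' !![c,s,0,0; s,c,0,0; 0,0,1,0; 0,0,0,1], ?_, ?_, ?_, ?_⟩
  · rw [LinearMap.det_toLin', Matrix.det_succ_row_zero]
    simp [Fin.sum_univ_succ, Matrix.det_fin_three, Fin.succAbove]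
    linear_combination hcs
  · intro x
    simp [minkowskiQ, Matrix.toLin'_apply, Matrix.mulVec, dotProduct, Fin.sum_univ_four]
    linear_combination (x 0 ^ 2 - x 1 ^ 2) * hcs
  · intro a
    funext i
    fin_cases i <;>
      simp [Matrix.toLin'_apply, Matrix.mulVec, dotProduct, Fin.sum_univ_four] <;>
      linear_combination a * hadd
  · intro b
    funext i
    fin_cases i <;>
      simp [Matrix.toLin'_apply, Matrix.mulVec, dotProduct, Fin.sum_univ_four]
    · linear_combination b * hsub
    · linear_combination (-b) * hsub

lemma aux_b2 (t : ℝ) (ht : t ≠ 0) :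
    ∃ g : (Fin 4 → ℝ) →ₗ[ℝ] (Fin 4 → ℝ),
      LinearMap.det g = 1 ∧ (∀ x, minkowskiQ (g x) = minkowskiQ x) ∧
      (∀ a : ℝ, g ![a, 0, a, 0] = t • ![a, 0, a, 0]) := by
  obtain ⟨c, hc⟩ : ∃ c : ℝ, c = (t + t⁻¹)/2 := ⟨_, rfl⟩
  obtain ⟨s, hs⟩ : ∃ s : ℝ, s = (t - t⁻¹)/2 := ⟨_, rfl⟩
  have hcs : c^2 - s^2 = 1 := by rw [hc, hs]; field_simp; ring
  have hadd : c + s = t := by rw [hc, hs]; field_simp; ring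
  refine ⟨Matrix.toLin' !![c,0,s,0; 0,1,0,0; s,0,c,0; 0,0,0,1], ?_, ?_, ?_⟩
  · rw [LinearMap.det_toLin', Matrix.det_succ_row_zero]
    simp [Fin.sum_univ_succ, Matrix.det_fin_three, Fin.succAbove]
    linear_combination hcs
  · intro x
    simp [minkowskiQ, Matrix.toLin'_apply, Matrix.mulVec, dotProduct, Fin.sum_univ_four]
    linear_combination (x 0 ^ 2 - x 2 ^ 2) * hcs
  · intro a
    funext i
    fin_cases i <;>
      simp [Matrix.toLin'_apply, Matrix.mulVec, dotProduct, Fin.sum_univ_four] <;>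
      linear_combination a * hadd

lemma aux_b3 (t : ℝ) (ht : t ≠ 0) :
    ∃ g : (Fin 4 → ℝ) →ₗ[ℝ] (Fin 4 → ℝ),
      LinearMap.det g = 1 ∧ (∀ x, minkowskiQ (g x) = minkowskiQ x) ∧
      (∀ a : ℝ, g ![a, 0, 0, a] = t • ![a, 0, 0, a]) := by
  obtain ⟨c, hc⟩ : ∃ c : ℝ, c = (t + t⁻¹)/2 := ⟨_, rfl⟩
  obtain ⟨s, hs⟩ : ∃ s : ℝ, s = (t - t⁻¹)/2 := ⟨_, rfl⟩
  have hcs : c^2 - s^2 = 1 := by rw [hc, hs]; field_simp; ring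
  have hadd : c + s = t := by rw [hc, hs]; field_simp; ring
  refine ⟨Matrix.toLin' !![c,0,0,s; 0,1,0,0; 0,0,1,0; s,0,0,c], ?_, ?_, ?_⟩
  · rw [LinearMap.det_toLin', Matrix.det_succ_row_zero]
    simp [Fin.sum_univ_succ, Matrix.det_fin_three, Fin.succAbove]
    linear_combination hcs
  · intro x
    simp [minkowskiQ, Matrix.toLin'_apply, Matrix.mulVec, dotProduct, Fin.sum_univ_four]
    linear_combination (x 0 ^ 2 - x 3 ^ 2) * hcs
  · intro a
    funext i
    fin_cases i <;>
      simp [Matrix.toLin'_apply, Matrix.mulVec, dotProduct, Fin.sum_univ_four] <;>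
      linear_combination a * hadd

lemma aux_key {Ω : Type*} [MeasurableSpace Ω] (P : Measure Ω) [IsProbabilityMeasure P]
    (Φ : (Fin 4 → ℝ) → Ω → ℝ) (hmeas : ∀ x, Measurable (Φ x))
    (hpaths : ∀ᵐ ω ∂P, Continuous fun x => Φ x ω)
    (hinv : ∀ (g : (Fin 4 → ℝ) →ₗ[ℝ] (Fin 4 → ℝ)) (b : Fin 4 → ℝ),
      LinearMap.det g = 1 → (∀ x, minkowskiQ (g x) = minkowskiQ x) →
      ∀ (n : ℕ) (x : Fin n → (Fin 4 → ℝ)),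
        Measure.map (fun ω (i : Fin n) => Φ (g (x i) + b) ω) P =
          Measure.map (fun ω (i : Fin n) => Φ (x i) ω) P)
    (v : Fin 4 → ℝ)
    (hv : ∀ n : ℕ, ∃ g : (Fin 4 → ℝ) →ₗ[ℝ] (Fin 4 → ℝ),
      LinearMap.det g = 1 ∧ (∀ x, minkowskiQ (g x) = minkowskiQ x) ∧
      g v = ((n : ℝ) + 1)⁻¹ • v) :
    ∀ᵐ ω ∂P, Φ v ω = Φ 0 ω := by
  classical
  have hFcont : Continuous fun y : Fin 2 → ℝ => min ((y 0 - y 1)^2) 1 :=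
    (((continuous_apply 0).sub (continuous_apply 1)).pow 2).min continuous_const
  have hpair : ∀ u w : Fin 4 → ℝ, Measurable (fun ω (i : Fin 2) => Φ (![u, w] i) ω) :=
    fun u w => measurable_pi_lambda _ (fun i => hmeas _)
  -- the integral is constant along the boost orbit
  have hconst : ∀ n : ℕ,
      (∫ ω, min ((Φ (((n : ℝ) + 1)⁻¹ • v) ω - Φ 0 ω)^2) 1 ∂P)
        = ∫ ω, min ((Φ v ω - Φ 0 ω)^2) 1 ∂P := by
    intro n
    obtain ⟨g, hdet, hQ, hgv⟩ := hv n
    have hmap := hinv g 0 hdet hQ 2 ![v, 0]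
    have heq : (fun ω (i : Fin 2) => Φ (g (![v, 0] i) + 0) ω)
        = fun ω (i : Fin 2) => Φ (![(((n : ℝ) + 1)⁻¹ • v), 0] i) ω := by
      funext ω i
      fin_cases i <;> simp [hgv]
    rw [heq] at hmap
    have e1 := integral_map (μ := P)
      (hpair (((n : ℝ) + 1)⁻¹ • v) 0).aemeasurable hFcont.aestronglyMeasurable
    have e2 := integral_map (μ := P) (hpair v 0).aemeasurable hFcont.aestronglyMeasurable
    rw [hmap] at e1
    rw [e2] at e1
    simpa using e1.symm
  -- the integral tends to 0 along the orbit, by dominated convergence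
  have htend : Tendsto
      (fun n : ℕ => ∫ ω, min ((Φ (((n : ℝ) + 1)⁻¹ • v) ω - Φ 0 ω)^2) 1 ∂P)
      atTop (𝓝 (∫ ω, (0 : ℝ) ∂P)) := by
    apply tendsto_integral_of_dominated_convergence (fun _ => (1 : ℝ))
    · intro n
      exact ((((hmeas _).sub (hmeas 0)).pow_const 2).min measurable_const).aestronglyMeasurable
    · exact integrable_const 1
    · intro n
      filter_upwards with ω
      rw [Real.norm_eq_abs, abs_le]
      constructor
      · linarith [le_min (sq_nonneg (Φ (((n : ℝ) + 1)⁻¹ • v) ω - Φ 0 ω)) (zero_le_one (α := ℝ))]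
      · exact min_le_right _ _
    · filter_upwards [hpaths] with ω hω
      have h1 : Tendsto (fun n : ℕ => ((n : ℝ) + 1)⁻¹ • v) atTop (𝓝 (0 : Fin 4 → ℝ)) := by
        have h0 : Tendsto (fun n : ℕ => ((n : ℝ) + 1)⁻¹) atTop (𝓝 (0 : ℝ)) := by
          simpa [one_div] using tendsto_one_div_add_atTop_nhds_zero_nat (𝕜 := ℝ)
        simpa using h0.smul_const v
      have h2 : Tendsto (fun n : ℕ => Φ (((n : ℝ) + 1)⁻¹ • v) ω) atTop (𝓝 (Φ 0 ω)) :=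
        (hω.tendsto 0).comp h1
      have h3 : Tendsto (fun n : ℕ => min ((Φ (((n : ℝ) + 1)⁻¹ • v) ω - Φ 0 ω)^2) 1)
          atTop (𝓝 (min ((Φ 0 ω - Φ 0 ω)^2) 1)) :=
        ((h2.sub tendsto_const_nhds).pow 2).min tendsto_const_nhds
      simpa using h3
  have hzero : ∫ ω, min ((Φ v ω - Φ 0 ω)^2) 1 ∂P = 0 := by
    simp only [hconst] at htend
    have := tendsto_nhds_unique htend tendsto_const_nhds
    simpa using this.symm
  have hint : Integrable (fun ω => min ((Φ v ω - Φ 0 ω)^2) 1) P := by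
    apply Integrable.mono' (integrable_const (1 : ℝ))
    · exact ((((hmeas _).sub (hmeas 0)).pow_const 2).min measurable_const).aestronglyMeasurable
    · filter_upwards with ω
      rw [Real.norm_eq_abs, abs_le]
      exact ⟨by linarith [le_min (sq_nonneg (Φ v ω - Φ 0 ω)) (zero_le_one (α := ℝ))],
        min_le_right _ _⟩
  have hnonneg : 0 ≤ᵐ[P] fun ω => min ((Φ v ω - Φ 0 ω)^2) 1 :=
    Filter.Eventually.of_forall fun ω => le_min (sq_nonneg _) zero_le_one
  have hae := (integral_eq_zero_iff_of_nonneg_ae hnonneg hint).mp hzero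
  filter_upwards [hae] with ω hω
  have h01 : min ((Φ v ω - Φ 0 ω)^2) 1 = 0 := hω
  have : (Φ v ω - Φ 0 ω)^2 = 0 := by
    rcases min_eq_iff.mp h01 with h | h
    · exact h.1
    · linarith [h.1]
  have := pow_eq_zero_iff (n := 2) (by norm_num) |>.mp this
  linarith [this]

lemma aux_add {Ω : Type*} [MeasurableSpace Ω] (P : Measure Ω) [IsProbabilityMeasure P]
    (Φ : (Fin 4 → ℝ) → Ω → ℝ) (hmeas : ∀ x, Measurable (Φ x))
    (hinv : ∀ (g : (Fin 4 → ℝ) →ₗ[ℝ] (Fin 4 → ℝ)) (b : Fin 4 → ℝ),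
      LinearMap.det g = 1 → (∀ x, minkowskiQ (g x) = minkowskiQ x) →
      ∀ (n : ℕ) (x : Fin n → (Fin 4 → ℝ)),
        Measure.map (fun ω (i : Fin n) => Φ (g (x i) + b) ω) P =
          Measure.map (fun ω (i : Fin n) => Φ (x i) ω) P)
    (x y : Fin 4 → ℝ)
    (hx : ∀ᵐ ω ∂P, Φ x ω = Φ 0 ω) (hy : ∀ᵐ ω ∂P, Φ (-y) ω = Φ 0 ω) :
    ∀ᵐ ω ∂P, Φ (x + y) ω = Φ 0 ω := by
  classical
  have hpair : ∀ u w : Fin 4 → ℝ, Measurable (fun ω (i : Fin 2) => Φ (![u, w] i) ω) :=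
    fun u w => measurable_pi_lambda _ (fun i => hmeas _)
  have hmap := hinv (LinearMap.id : (Fin 4 → ℝ) →ₗ[ℝ] (Fin 4 → ℝ)) (-y) LinearMap.det_id (fun _ => rfl) 2 ![x + y, 0]
  have heq : (fun ω (i : Fin 2) => Φ ((LinearMap.id : (Fin 4 → ℝ) →ₗ[ℝ] (Fin 4 → ℝ)) (![x + y, 0] i) + -y) ω)
      = fun ω (i : Fin 2) => Φ (![x, -y] i) ω := by
    funext ω i
    fin_cases i <;> simp
  rw [heq] at hmap
  have hT : MeasurableSet {p : Fin 2 → ℝ | ¬ p 0 = p 1} :=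
    (measurableSet_eq_fun (measurable_pi_apply 0) (measurable_pi_apply 1)).compl
  rw [ae_iff]
  have e2 : P {ω | ¬ Φ (x + y) ω = Φ 0 ω}
      = (Measure.map (fun ω (i : Fin 2) => Φ (![x + y, 0] i) ω) P) {p | ¬ p 0 = p 1} := by
    rw [Measure.map_apply (hpair _ _) hT]
    congr 1
  have e1 : (Measure.map (fun ω (i : Fin 2) => Φ (![x, -y] i) ω) P) {p | ¬ p 0 = p 1}
      = P {ω | ¬ Φ x ω = Φ (-y) ω} := by
    rw [Measure.map_apply (hpair _ _) hT]
    congr 1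
  have hxy : ∀ᵐ ω ∂P, Φ x ω = Φ (-y) ω := by
    filter_upwards [hx, hy] with ω h1 h2
    rw [h1, h2]
  rw [e2, ← hmap, e1]
  exact ae_iff.mp hxy


end AuxPoincare

open Filter Topology in
/-- **Corollary 3.1.** A standard real-valued Gaussian random field on `ℝ⁴` with almost surely
continuous sample paths whose finite-dimensional distributions are invariant under the Poincaré
group (affine maps `x ↦ g x + b` with `det g = 1` and `Q ∘ g = Q`) is trivial as a spatial
field: `Φ(x) = Φ(0)` almost surely, for every `x`. -/
theorem poincare_invariant_gaussian_field_is_spatially_trivial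
    {Ω : Type*} [MeasurableSpace Ω] (P : Measure Ω) [IsProbabilityMeasure P]
    (Φ : (Fin 4 → ℝ) → Ω → ℝ)
    (hmeas : ∀ x, Measurable (Φ x))
    -- Gaussian field: every finite real linear combination is a (possibly degenerate) Gaussian
    (hgauss : ∀ (n : ℕ) (x : Fin n → (Fin 4 → ℝ)) (a : Fin n → ℝ),
      ∃ (m : ℝ) (v : ℝ≥0),
        Measure.map (fun ω => ∑ i, a i * Φ (x i) ω) P = gaussianReal m v)
    -- standard: centered with unit variance
    (hcentered : ∀ x, ∫ ω, Φ x ω ∂P = 0)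
    (hstd : ∀ x, ∫ ω, (Φ x ω) ^ 2 ∂P = 1)
    -- almost surely continuous sample paths
    (hpaths : ∀ᵐ ω ∂P, Continuous fun x => Φ x ω)
    -- invariance of the finite-dimensional distributions under the Poincaré group
    (hinv : ∀ (g : (Fin 4 → ℝ) →ₗ[ℝ] (Fin 4 → ℝ)) (b : Fin 4 → ℝ),
      LinearMap.det g = 1 → (∀ x, minkowskiQ (g x) = minkowskiQ x) →
      ∀ (n : ℕ) (x : Fin n → (Fin 4 → ℝ)),
        Measure.map (fun ω (i : Fin n) => Φ (g (x i) + b) ω) P =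
          Measure.map (fun ω (i : Fin n) => Φ (x i) ω) P) :
    ∀ x : Fin 4 → ℝ, ∀ᵐ ω ∂P, Φ x ω = Φ 0 ω := by
  intro x
  have k1 : ∀ a : ℝ, ∀ᵐ ω ∂P, Φ ![a, a, 0, 0] ω = Φ 0 ω := by
    intro a
    apply aux_key P Φ hmeas hpaths hinv
    intro n
    have hn : ((n : ℝ) + 1)⁻¹ ≠ 0 := inv_ne_zero (by positivity)
    obtain ⟨g, h1, h2, h3, _⟩ := aux_b1 ((n : ℝ) + 1)⁻¹ hn
    exact ⟨g, h1, h2, h3 a⟩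
  have k2 : ∀ b : ℝ, ∀ᵐ ω ∂P, Φ ![b, -b, 0, 0] ω = Φ 0 ω := by
    intro b
    apply aux_key P Φ hmeas hpaths hinv
    intro n
    obtain ⟨g, h1, h2, _, h4⟩ := aux_b1 ((n : ℝ) + 1) (by positivity)
    exact ⟨g, h1, h2, h4 b⟩
  have k3 : ∀ c : ℝ, ∀ᵐ ω ∂P, Φ ![c, 0, c, 0] ω = Φ 0 ω := by
    intro c
    apply aux_key P Φ hmeas hpaths hinv
    intro n
    have hn : ((n : ℝ) + 1)⁻¹ ≠ 0 := inv_ne_zero (by positivity)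
    obtain ⟨g, h1, h2, h3⟩ := aux_b2 ((n : ℝ) + 1)⁻¹ hn
    exact ⟨g, h1, h2, h3 c⟩
  have k4 : ∀ d : ℝ, ∀ᵐ ω ∂P, Φ ![d, 0, 0, d] ω = Φ 0 ω := by
    intro d
    apply aux_key P Φ hmeas hpaths hinv
    intro n
    have hn : ((n : ℝ) + 1)⁻¹ ≠ 0 := inv_ne_zero (by positivity)
    obtain ⟨g, h1, h2, h3⟩ := aux_b3 ((n : ℝ) + 1)⁻¹ hn
    exact ⟨g, h1, h2, h3 d⟩
  set a : ℝ := (x 0 + x 1 - x 2 - x 3) / 2 with ha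
  set b : ℝ := (x 0 - x 1 - x 2 - x 3) / 2 with hb
  have s2 : ∀ᵐ ω ∂P, Φ (![a, a, 0, 0] + ![b, -b, 0, 0]) ω = Φ 0 ω := by
    apply aux_add P Φ hmeas hinv _ _ (k1 a)
    have hneg : -(![b, -b, 0, 0] : Fin 4 → ℝ) = ![-b, -(-b), 0, 0] := by
      funext i; fin_cases i <;> simp
    rw [hneg]
    exact k2 (-b)
  have s3 : ∀ᵐ ω ∂P, Φ (![a, a, 0, 0] + ![b, -b, 0, 0] + ![x 2, 0, x 2, 0]) ω = Φ 0 ω := by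
    apply aux_add P Φ hmeas hinv _ _ s2
    have hneg : -(![x 2, 0, x 2, 0] : Fin 4 → ℝ) = ![-(x 2), 0, -(x 2), 0] := by
      funext i; fin_cases i <;> simp
    rw [hneg]
    exact k3 (-(x 2))
  have s4 : ∀ᵐ ω ∂P,
      Φ (![a, a, 0, 0] + ![b, -b, 0, 0] + ![x 2, 0, x 2, 0] + ![x 3, 0, 0, x 3]) ω = Φ 0 ω := by
    apply aux_add P Φ hmeas hinv _ _ s3
    have hneg : -(![x 3, 0, 0, x 3] : Fin 4 → ℝ) = ![-(x 3), 0, 0, -(x 3)] := by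
      funext i; fin_cases i <;> simp
    rw [hneg]
    exact k4 (-(x 3))
  have hxeq : x = ![a, a, 0, 0] + ![b, -b, 0, 0] + ![x 2, 0, x 2, 0] + ![x 3, 0, 0, x 3] := by
    funext i
    fin_cases i <;> simp [ha, hb, Pi.add_apply] <;> ring
  rw [hxeq]
  exact s4
end

section
/- Let the Galilei group act on ℝ³ × ℝ by the affine maps (x, t) ↦ (A x + t v + b, t + s) with A ∈ SO(3), v, b ∈ ℝ³, s ∈ ℝ. Let Φ = (Φ(x,t))_{(x,t)∈ℝ³×ℝ} be a standard real-valued Gaussian random field on ℝ³ × ℝ with almost surely continuous sample paths, whose finite-dimensional distributions are invariant under the Galilei group. Then Φ loses all space dependence: for every (x, t) ∈ ℝ³ × ℝ, Φ(x, t) = Φ(0, t) almost surely. -/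
open MeasureTheory ProbabilityTheory Matrix Filter
open scoped NNReal Topology

/-- **Corollary 3.2.** A standard real-valued Gaussian random field on `ℝ³ × ℝ` with almost
surely continuous sample paths whose finite-dimensional distributions are invariant under the
Galilei group (affine maps `(x,t) ↦ (A x + t v + b, t + s)` with `A ∈ SO(3)`, `v, b ∈ ℝ³`,
`s ∈ ℝ`) loses all space dependence: `Φ(x,t) = Φ(0,t)` almost surely, for every `(x,t)`. -/
theorem galilei_invariant_gaussian_field_has_no_space_dependence
    {Ω : Type*} [MeasurableSpace Ω] (P : Measure Ω) [IsProbabilityMeasure P]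
    (Φ : ((Fin 3 → ℝ) × ℝ) → Ω → ℝ)
    (hmeas : ∀ p, Measurable (Φ p))
    -- Gaussian field: every finite real linear combination is a (possibly degenerate) Gaussian
    (hgauss : ∀ (n : ℕ) (p : Fin n → (Fin 3 → ℝ) × ℝ) (a : Fin n → ℝ),
      ∃ (m : ℝ) (v : ℝ≥0),
        Measure.map (fun ω => ∑ i, a i * Φ (p i) ω) P = gaussianReal m v)
    -- standard: centered with unit variance
    (hcentered : ∀ p, ∫ ω, Φ p ω ∂P = 0)
    (hstd : ∀ p, ∫ ω, (Φ p ω) ^ 2 ∂P = 1)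
    -- almost surely continuous sample paths
    (hpaths : ∀ᵐ ω ∂P, Continuous fun p => Φ p ω)
    -- invariance of the finite-dimensional distributions under the Galilei group
    (hinv : ∀ (A : Matrix (Fin 3) (Fin 3) ℝ), A * Aᵀ = 1 → A.det = 1 →
      ∀ (v b : Fin 3 → ℝ) (s : ℝ) (n : ℕ) (p : Fin n → (Fin 3 → ℝ) × ℝ),
        Measure.map
          (fun ω (i : Fin n) =>
            Φ (A.mulVec (p i).1 + (p i).2 • v + b, (p i).2 + s) ω) P =
          Measure.map (fun ω (i : Fin n) => Φ (p i) ω) P) :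
    ∀ (x : Fin 3 → ℝ) (t : ℝ), ∀ᵐ ω ∂P, Φ (x, t) ω = Φ (0, t) ω := by
  intro x t
  set tn : ℕ → ℝ := fun n => t + (1 : ℝ) / (n + 1) with htn
  have htnne : ∀ n : ℕ, t - tn n ≠ 0 := by
    intro n
    have : (0 : ℝ) < 1 / (n + 1) := by positivity
    simp only [htn]
    intro h
    nlinarith
  have htends : Tendsto tn atTop (𝓝 t) := by
    have := tendsto_one_div_add_atTop_nhds_zero_nat (𝕜 := ℝ)
    have h2 : Tendsto (fun n : ℕ => t + 1 / ((n : ℝ) + 1)) atTop (𝓝 (t + 0)) :=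
      tendsto_const_nhds.add this
    rw [htn]; simpa using h2
  set Xn : ℕ → Ω → ℝ := fun n ω => Φ (x, t) ω - Φ (0, tn n) ω with hXn
  set Zn : ℕ → Ω → ℝ := fun n ω => Φ (0, t) ω - Φ (0, tn n) ω with hZn
  -- equality of the laws of Xn n and Zn n
  have key : ∀ n : ℕ, Measure.map (Xn n) P = Measure.map (Zn n) P := by
    intro n
    set v : Fin 3 → ℝ := (t - tn n)⁻¹ • x with hv
    have h2 := hinv 1 (by simp) (by simp) v (-(tn n • v)) 0 2 ![(0, t), (0, tn n)]
    have e0 : ((1 : Matrix (Fin 3) (Fin 3) ℝ).mulVec 0 + t • v + -(tn n • v), t + 0)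
        = ((x, t) : (Fin 3 → ℝ) × ℝ) := by
      have : t • v - tn n • v = x := by
        rw [← sub_smul, hv, smul_smul, mul_inv_cancel₀ (htnne n), one_smul]
      simp [Matrix.mulVec_zero, sub_eq_add_neg ] at this ⊢
      exact this
    have e1 : ((1 : Matrix (Fin 3) (Fin 3) ℝ).mulVec 0 + tn n • v + -(tn n • v), tn n + 0)
        = ((0, tn n) : (Fin 3 → ℝ) × ℝ) := by
      simp [Matrix.mulVec_zero]
    have h3 : Measure.map (fun ω (i : Fin 2) => Φ (![(x, t), (0, tn n)] i) ω) P
        = Measure.map (fun ω (i : Fin 2) => Φ (![(0, t), (0, tn n)] i) ω) P := by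
      convert h2 using 2
      funext ω
      funext i
      fin_cases i
      · exact congrArg (fun q => Φ q ω) e0.symm
      · exact congrArg (fun q => Φ q ω) e1.symm
    -- push forward by f ↦ f 0 - f 1
    have hg : Measurable (fun f : Fin 2 → ℝ => f 0 - f 1) :=
      (measurable_pi_apply 0).sub (measurable_pi_apply 1)
    have hF1 : Measurable (fun ω (i : Fin 2) => Φ (![(x, t), (0, tn n)] i) ω) :=
      measurable_pi_lambda _ (fun i => hmeas _)
    have hF2 : Measurable (fun ω (i : Fin 2) => Φ (![(0, t), (0, tn n)] i) ω) :=
      measurable_pi_lambda _ (fun i => hmeas _)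
    have := congrArg (Measure.map (fun f : Fin 2 → ℝ => f 0 - f 1)) h3
    rw [Measure.map_map hg hF1, Measure.map_map hg hF2] at this
    convert this using 2 <;> funext ω <;> simp [hXn, hZn, Function.comp]
  -- a.e. convergence of Zn to 0
  have hZae : ∀ᵐ ω ∂P, Tendsto (fun n => Zn n ω) atTop (𝓝 0) := by
    filter_upwards [hpaths] with ω hω
    have hc : Tendsto (fun n : ℕ => ((0 : Fin 3 → ℝ), tn n)) atTop (𝓝 (0, t)) :=
      tendsto_const_nhds.prodMk_nhds htends
    have := (hω.tendsto _).comp hc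
    have h' : Tendsto (fun n => Φ (0, t) ω - Φ (0, tn n) ω) atTop
        (𝓝 (Φ (0, t) ω - Φ (0, t) ω)) := tendsto_const_nhds.sub this
    simpa [hZn] using h'
  have hZmeas : ∀ n, AEStronglyMeasurable (Zn n) P :=
    fun n => (((hmeas _).sub (hmeas _))).aestronglyMeasurable
  have hZim : TendstoInMeasure P Zn atTop (fun _ => (0 : ℝ)) :=
    tendstoInMeasure_of_tendsto_ae hZmeas hZae
  -- transfer to Xn
  have hXim : TendstoInMeasure P Xn atTop (fun _ => (0 : ℝ)) := by
    intro ε hε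
    have hset : MeasurableSet {y : ℝ | ε ≤ edist y 0} :=
      measurableSet_le measurable_const (measurable_edist.comp
        (measurable_id.prodMk measurable_const))
    have heq : ∀ n, P {ω | ε ≤ edist (Xn n ω) 0} = P {ω | ε ≤ edist (Zn n ω) 0} := by
      intro n
      have h1 : P {ω | ε ≤ edist (Xn n ω) 0} = (Measure.map (Xn n) P) {y | ε ≤ edist y 0} := by
        rw [Measure.map_apply (show Measurable (Xn n) from (hmeas _).sub (hmeas _)) hset]; rfl
      have h2 : P {ω | ε ≤ edist (Zn n ω) 0} = (Measure.map (Zn n) P) {y | ε ≤ edist y 0} := by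
        rw [Measure.map_apply (show Measurable (Zn n) from (hmeas _).sub (hmeas _)) hset]; rfl
      rw [h1, h2, key n]
    simp only [heq]
    exact hZim ε hε
  obtain ⟨ns, hns, hae⟩ := hXim.exists_seq_tendsto_ae
  filter_upwards [hae, hpaths] with ω h0 hω
  have hXtend : Tendsto (fun n => Xn n ω) atTop (𝓝 (Φ (x, t) ω - Φ (0, t) ω)) := by
    have hc : Tendsto (fun n : ℕ => ((0 : Fin 3 → ℝ), tn n)) atTop (𝓝 (0, t)) :=
      tendsto_const_nhds.prodMk_nhds htends
    have := (hω.tendsto _).comp hc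
    exact tendsto_const_nhds.sub this
  have hsub : Tendsto (fun i => Xn (ns i) ω) atTop (𝓝 (Φ (x, t) ω - Φ (0, t) ω)) :=
    hXtend.comp hns.tendsto_atTop
  have := tendsto_nhds_unique hsub h0
  linarith
end

section
/- Let f : ℝⁿ → ℝ (n ≥ 1) be a twice continuously differentiable function which is invariant under the orthogonal group: f(g x) = f(x) for every g ∈ O(n) and x ∈ ℝⁿ. Then for every unit vector γ ∈ ℝⁿ, the second directional derivative of f at 0 along γ equals (1/n) ∑_{i=1}^n ∂²f/∂xᵢ²(0), i.e. it equals (1/n) times the Laplacian of f at the origin. -/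
open Matrix

open scoped RealInnerProductSpace in
lemma exists_orthogonal_mulVec_single'
    (n : ℕ) (γ : Fin n → ℝ) (hγ : ∑ i, γ i ^ 2 = 1) (i : Fin n) :
    ∃ g : Matrix (Fin n) (Fin n) ℝ, g * gᵀ = 1 ∧ g.mulVec (Pi.single i 1) = γ := by
  classical
  set E := EuclideanSpace ℝ (Fin n)
  set u : E := (WithLp.equiv 2 _).symm γ with hu_def
  set v : E := EuclideanSpace.single i 1 with hv_def
  have hu : ‖u‖ = 1 := by
    rw [EuclideanSpace.norm_eq]
    have : ∑ j, ‖u j‖ ^ 2 = 1 := by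
      simpa [hu_def, Real.norm_eq_abs, sq_abs] using hγ
    rw [this, Real.sqrt_one]
  have hv : ‖v‖ = 1 := by rw [hv_def, EuclideanSpace.norm_single, norm_one]
  let T : E ≃ₗᵢ[ℝ] E := Submodule.reflection (ℝ ∙ (v - u))ᗮ
  have hT : T v = u := Submodule.reflection_sub (hv.trans hu.symm)
  have hx : ∀ x' : E, ∑ k, x' k • EuclideanSpace.single k 1 = x' := fun x' => by
    simpa using (EuclideanSpace.basisFun (Fin n) ℝ).sum_repr x'
  refine ⟨Matrix.of fun j k => T (EuclideanSpace.single k 1) j, ?_, ?_⟩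
  · rw [mul_eq_one_comm]
    ext j k
    rw [Matrix.mul_apply, Matrix.one_apply]
    have key : ∑ l, (T (EuclideanSpace.single j 1)) l * (T (EuclideanSpace.single k 1)) l
        = ⟪T (EuclideanSpace.single j 1), T (EuclideanSpace.single k 1)⟫ := by
      rw [PiLp.inner_apply]
      simp [RCLike.inner_apply, mul_comm]
    simp only [Matrix.transpose_apply, Matrix.of_apply]
    rw [key, T.inner_map_map, EuclideanSpace.inner_single_left,
      EuclideanSpace.single_apply]
    simp [eq_comm]
  · funext j
    have h1 : T ((WithLp.equiv 2 (Fin n → ℝ)).symm (Pi.single i 1)) = u := by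
      rw [← hT]; rfl
    calc (Matrix.of fun j k => T (EuclideanSpace.single k 1) j).mulVec (Pi.single i 1) j
        = ∑ k, (Pi.single i 1 : Fin n → ℝ) k * T (EuclideanSpace.single k 1) j := by
          simp [Matrix.mulVec, dotProduct, mul_comm]
      _ = (∑ k, (Pi.single i 1 : Fin n → ℝ) k • T (EuclideanSpace.single k 1)) j := by
          rw [WithLp.ofLp_sum, Finset.sum_apply]
          exact Finset.sum_congr rfl fun k _ => rfl
      _ = T (∑ k, (Pi.single i 1 : Fin n → ℝ) k • EuclideanSpace.single k 1) j := by
          rw [map_sum]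
          simp only [LinearIsometryEquiv.map_smul]
      _ = T ((WithLp.equiv 2 (Fin n → ℝ)).symm (Pi.single i 1)) j := by
          exact congrArg (fun z : E => T z j) (hx ((WithLp.equiv 2 (Fin n → ℝ)).symm (Pi.single i 1)))
      _ = γ j := by rw [h1]; rfl

lemma second_deriv_line' (n : ℕ) (f : (Fin n → ℝ) → ℝ) (hf : ContDiff ℝ 2 f)
    (v : Fin n → ℝ) :
    deriv (deriv fun t : ℝ => f (t • v)) 0 =
      fderiv ℝ (fun y => fderiv ℝ f y v) 0 v := by
  have hf1 : ContDiff ℝ 1 (fderiv ℝ f) := hf.fderiv_right (le_refl 2)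
  have hline : ∀ t : ℝ, HasDerivAt (fun s : ℝ => s • v) v t := fun t => by
    simpa using (hasDerivAt_id t).smul_const v
  have hd1 : deriv (fun t : ℝ => f (t • v)) = fun t : ℝ => fderiv ℝ f (t • v) v := by
    funext t
    exact (((hf.differentiable (by norm_num)) (t • v)).hasFDerivAt.comp_hasDerivAt t
      (hline t)).deriv
  have h2 : HasFDerivAt (fderiv ℝ f) (fderiv ℝ (fderiv ℝ f) 0) 0 :=
    ((hf1.differentiable one_ne_zero) 0).hasFDerivAt
  have h2' : HasFDerivAt (fderiv ℝ f) (fderiv ℝ (fderiv ℝ f) 0) ((0 : ℝ) • v) := by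
    rwa [zero_smul]
  have h3 : HasDerivAt (fun t : ℝ => fderiv ℝ f (t • v)) (fderiv ℝ (fderiv ℝ f) 0 v) 0 :=
    h2'.comp_hasDerivAt 0 (hline 0)
  have h4 : HasDerivAt (fun t : ℝ => fderiv ℝ f (t • v) v)
      ((fderiv ℝ (fderiv ℝ f) 0 v) v) 0 :=
    (ContinuousLinearMap.apply ℝ ℝ v).hasFDerivAt.comp_hasDerivAt 0 h3
  have h5 : HasFDerivAt (fun y => fderiv ℝ f y v)
      ((ContinuousLinearMap.apply ℝ ℝ v).comp (fderiv ℝ (fderiv ℝ f) 0)) 0 :=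
    (ContinuousLinearMap.apply ℝ ℝ v).hasFDerivAt.comp 0 h2
  rw [hd1, h4.deriv, h5.fderiv]
  rfl


/-- **Key computation in the proof of Proposition 4.1.** If `f : ℝⁿ → ℝ` is `C²` and invariant
under the orthogonal group `O(n)`, then for every unit vector `γ` the second directional
derivative of `f` at `0` along `γ` equals `(1/n)` times the Laplacian of `f` at the origin. -/
theorem second_directional_derivative_of_orthogonally_invariant_function
    (n : ℕ) (hn : 1 ≤ n)
    (f : (Fin n → ℝ) → ℝ) (hf : ContDiff ℝ 2 f)
    (hinv : ∀ g : Matrix (Fin n) (Fin n) ℝ, g * gᵀ = 1 → ∀ x, f (g.mulVec x) = f x)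
    (γ : Fin n → ℝ) (hγ : ∑ i, γ i ^ 2 = 1) :
    deriv (deriv fun t : ℝ => f (t • γ)) 0 =
      (1 / (n : ℝ)) *
        ∑ i : Fin n,
          fderiv ℝ (fun y => fderiv ℝ f y (Pi.single i 1)) 0 (Pi.single i 1) := by
  have key : ∀ i : Fin n,
      fderiv ℝ (fun y => fderiv ℝ f y (Pi.single i 1)) 0 (Pi.single i 1) =
        deriv (deriv fun t : ℝ => f (t • γ)) 0 := by
    intro i
    obtain ⟨g, hg, hgi⟩ := exists_orthogonal_mulVec_single' n γ hγ i
    have hfun : (fun t : ℝ => f (t • γ)) = fun t : ℝ => f (t • (Pi.single i 1 : Fin n → ℝ)) := by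
      funext t
      rw [← hgi, ← Matrix.mulVec_smul, hinv g hg]
    rw [hfun, second_deriv_line' n f hf]
  rw [Finset.sum_congr rfl fun i _ => key i, Finset.sum_const, Finset.card_univ,
    Fintype.card_fin, nsmul_eq_mul]
  have hn' : (n : ℝ) ≠ 0 := Nat.cast_ne_zero.mpr (by omega)
  field_simp
end

section
/- Let k ≤ n and let M be a real matrix with k rows and n columns, with rows m₁, …, m_k ∈ ℝⁿ. Let P = { ∑_{i=1}^k tᵢ mᵢ : t₁, …, t_k ∈ [0,1] } be the parallelotope spanned by the rows. Then det(M Mᵀ) equals the square of the k-dimensional Hausdorff measure of P (with the Hausdorff measure normalized so that it agrees with Lebesgue measure on k-dimensional affine subspaces). -/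
open MeasureTheory Matrix

/-- **Lemma 5.2.** Let `M` be a real `k × n` matrix with `k ≤ n`, with rows `m₁, …, m_k`, and
let `P = {∑ tᵢ mᵢ : tᵢ ∈ [0,1]}` be the parallelotope spanned by the rows, viewed in Euclidean
`ℝⁿ`.  Then `det (M Mᵀ)` is the square of the `k`-dimensional volume of `P`, where the
`k`-dimensional volume (the Hausdorff measure normalized to agree with Lebesgue measure on
`k`-dimensional affine subspaces) is computed as the Lebesgue measure of the preimage of `P`
under any linear isometry of Euclidean `ℝᵏ` into Euclidean `ℝⁿ` whose range contains `P`. -/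
theorem gram_determinant_eq_squared_volume_of_parallelotope
    (k n : ℕ) (hkn : k ≤ n) (M : Matrix (Fin k) (Fin n) ℝ)
    (P : Set (EuclideanSpace ℝ (Fin n)))
    (hP : P = {y | ∃ t : Fin k → ℝ, (∀ i, t i ∈ Set.Icc (0 : ℝ) 1) ∧
      ∀ j, y j = ∑ i, t i * M i j})
    (J : EuclideanSpace ℝ (Fin k) →ₗᵢ[ℝ] EuclideanSpace ℝ (Fin n))
    (hJ : P ⊆ Set.range J) :
    (M * Mᵀ).det = ((volume (J ⁻¹' P)).toReal) ^ 2 := by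
  classical
  -- rows of M
  set m : Fin k → EuclideanSpace ℝ (Fin n) := fun i => WithLp.toLp 2 (fun j => M i j) with hm
  -- each row lies in P
  have hmP : ∀ i, m i ∈ P := by
    intro i
    rw [hP]
    refine ⟨fun i' => if i' = i then 1 else 0, ?_, ?_⟩
    · intro i'; dsimp only; split <;> constructor <;> norm_num
    · intro j
      simp [Finset.sum_ite_eq', hm]
  -- choose preimages of the rows under J
  choose x hx using fun i => hJ (hmP i)
  -- the matrix of the map t ↦ ∑ tᵢ xᵢ
  set G : Matrix (Fin k) (Fin k) ℝ := fun j i => x i j with hG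
  set g : EuclideanSpace ℝ (Fin k) →ₗ[ℝ] EuclideanSpace ℝ (Fin k) := Matrix.toEuclideanLin G
    with hg
  have hgcoord : ∀ (t : EuclideanSpace ℝ (Fin k)) (j : Fin k),
      g t j = ∑ i, t i * x i j := by
    intro t j
    rw [hg, Matrix.toEuclideanLin_apply]
    simp [Matrix.mulVec, dotProduct, hG, mul_comm]
  -- J ∘ g has coordinates given by M
  have hJg : ∀ (t : EuclideanSpace ℝ (Fin k)) (j : Fin n),
      J (g t) j = ∑ i, t i * M i j := by
    intro t j
    have hgt : g t = ∑ i, t i • x i := by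
      apply PiLp.ext
      intro j
      rw [hgcoord]
      rw [show (∑ i, t i • x i) j = ∑ i, (t i • x i) j from by rw [WithLp.ofLp_sum, Finset.sum_apply]]
      simp [smul_eq_mul]
    rw [hgt]
    have h1 : J (∑ i, t i • x i) = ∑ i, t i • J (x i) := by
      rw [map_sum]; simp
    rw [h1]
    rw [show (∑ i, t i • J (x i)) j = ∑ i, (t i • J (x i)) j from by rw [WithLp.ofLp_sum, Finset.sum_apply]]
    simp [hx, hm, smul_eq_mul]
  -- the unit cube
  set Q : Set (EuclideanSpace ℝ (Fin k)) := {t | ∀ i, t i ∈ Set.Icc (0:ℝ) 1} with hQ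
  have hQvol : volume Q = 1 := by
    have hmeas : MeasurableSet (Set.univ.pi fun _ : Fin k => Set.Icc (0:ℝ) 1) :=
      MeasurableSet.univ_pi fun _ => measurableSet_Icc
    have := (PiLp.volume_preserving_ofLp (Fin k)).measure_preimage
      hmeas.nullMeasurableSet
    have hQeq : Q = (@WithLp.ofLp 2 (Fin k → ℝ)) ⁻¹'
        (Set.univ.pi fun _ : Fin k => Set.Icc (0:ℝ) 1) := by
      ext t
      constructor
      · intro h i _
        exact h i
      · intro h i
        exact h i (Set.mem_univ i)
    rw [hQeq, this, volume_pi_pi]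
    simp
  -- J ⁻¹' P = g '' Q
  have hpre : J ⁻¹' P = g '' Q := by
    ext y
    constructor
    · intro hy
      rw [hP] at hy
      obtain ⟨t, ht, hyt⟩ := hy
      refine ⟨WithLp.toLp 2 t, ht, ?_⟩
      have : J (g (WithLp.toLp 2 t)) = J y := by
        apply PiLp.ext
        intro j
        rw [hJg (WithLp.toLp 2 t) j]
        exact (hyt j).symm
      exact J.injective this
    · rintro ⟨t, ht, rfl⟩
      rw [hP]
      exact ⟨t, ht, fun j => hJg t j⟩
  -- compute the volume
  have hdetg : LinearMap.det g = G.det := by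
    rw [hg, Matrix.toEuclideanLin_eq_toLin, LinearMap.det_toLin]
  have hvol : volume (J ⁻¹' P) = ENNReal.ofReal |G.det| := by
    rw [hpre, MeasureTheory.Measure.addHaar_image_linearMap, hdetg, hQvol, mul_one]
  -- Gram matrix identity : M * Mᵀ = Gᵀ * G
  have hGram : M * Mᵀ = Gᵀ * G := by
    ext i j
    have h1 : (M * Mᵀ) i j = ∑ l, M i l * M j l := by
      simp [Matrix.mul_apply, Matrix.transpose_apply]
    have h2 : (Gᵀ * G) i j = ∑ l, x i l * x j l := by
      rw [Matrix.mul_apply]; rfl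
    rw [h1, h2]
    have hinner : (inner ℝ (x i) (x j) : ℝ) = inner ℝ (J (x i)) (J (x j)) := by
      rw [J.inner_map_map]
    rw [PiLp.inner_apply, PiLp.inner_apply] at hinner
    simp only [RCLike.inner_apply, conj_trivial] at hinner
    calc ∑ l, M i l * M j l = ∑ l, (m i) l * (m j) l := by simp [hm]
      _ = ∑ l, x i l * x j l := by
          rw [← hx i, ← hx j]
          simpa only [mul_comm] using hinner.symm
  rw [hGram, Matrix.det_mul, Matrix.det_transpose, hvol]
  rw [ENNReal.toReal_ofReal (abs_nonneg _)]
  rw [sq_abs]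
  ring
end

section
/- Let k ≤ n and let u₁, …, u_k be independent random vectors in ℝⁿ, where uᵢ is a centered Gaussian vector with covariance matrix αᵢ² Iₙ (i.e. its n coordinates are independent centered Gaussians of variance αᵢ²), with αᵢ > 0. Let G be the random k × k Gram matrix with entries Gᵢⱼ = ⟨uᵢ, uⱼ⟩. Then the expected value of det G — that is, the expected squared k-dimensional volume of the random parallelotope { ∑ tᵢ uᵢ : tᵢ ∈ [0,1] } — equals (n!/(n−k)!) · ∏_{i=1}^k αᵢ². -/
open MeasureTheory ProbabilityTheory Matrix
open scoped NNReal ENNReal Real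

namespace GramDetAux

/-! ### Integrability of `x ^ m * exp (-b * x ^ 2)` -/

lemma integrable_pow_mul_exp_neg_mul_sq' {b : ℝ} (hb : 0 < b) (m : ℕ) :
    Integrable (fun x : ℝ => x ^ m * Real.exp (-b * x ^ 2)) := by
  have hb2 : 0 < b / 2 := by linarith
  set C : ℝ := 1 + (m.factorial : ℝ) / (b / 2) ^ m with hC
  have hbound : ∀ x : ℝ, ‖x ^ m * Real.exp (-b * x ^ 2)‖ ≤
      C * Real.exp (-(b / 2) * x ^ 2) := by
    intro x
    have h1 : 0 ≤ b / 2 * x ^ 2 := by positivity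
    have h2 : (b / 2 * x ^ 2) ^ m / (m.factorial : ℝ) ≤ Real.exp (b / 2 * x ^ 2) :=
      Real.pow_div_factorial_le_exp _ h1 m
    have hfac : (0 : ℝ) < (m.factorial : ℝ) := by positivity
    have h3 : |x| ^ m ≤ 1 + (x ^ 2) ^ m := by
      rcases le_total (|x|) 1 with h | h
      · have h1' : |x| ^ m ≤ 1 := pow_le_one₀ (abs_nonneg x) h
        have h2' : (0:ℝ) ≤ (x ^ 2) ^ m := by positivity
        linarith
      · have hx2 : |x| ≤ x ^ 2 := by
          nlinarith [sq_abs x, abs_nonneg x]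
        have h1' : |x| ^ m ≤ (x ^ 2) ^ m := pow_le_pow_left₀ (abs_nonneg x) hx2 m
        linarith
    have h4 : (x ^ 2) ^ m ≤ (m.factorial : ℝ) / (b / 2) ^ m * Real.exp (b / 2 * x ^ 2) := by
      have hbm : (0 : ℝ) < (b / 2) ^ m := by positivity
      rw [mul_pow] at h2
      rw [div_le_iff₀ hfac] at h2
      rw [div_mul_eq_mul_div, le_div_iff₀ hbm]
      nlinarith [Real.exp_pos (b / 2 * x ^ 2)]
    have hexp1 : Real.exp (-b * x ^ 2) ≤ Real.exp (-(b / 2) * x ^ 2) := by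
      apply Real.exp_le_exp.mpr; nlinarith [sq_nonneg x]
    have hexp0 : 0 < Real.exp (-b * x ^ 2) := Real.exp_pos _
    have hexp0' : 0 < Real.exp (-(b / 2) * x ^ 2) := Real.exp_pos _
    have key : |x| ^ m * Real.exp (-b * x ^ 2) ≤ C * Real.exp (-(b / 2) * x ^ 2) := by
      have hee : Real.exp (b / 2 * x ^ 2) * Real.exp (-b * x ^ 2)
          = Real.exp (-(b / 2) * x ^ 2) := by
        rw [← Real.exp_add]; ring_nf
      calc |x| ^ m * Real.exp (-b * x ^ 2)
          ≤ (1 + (x ^ 2) ^ m) * Real.exp (-b * x ^ 2) := by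
            apply mul_le_mul_of_nonneg_right h3 hexp0.le
        _ ≤ (1 + (m.factorial : ℝ) / (b / 2) ^ m * Real.exp (b / 2 * x ^ 2)) *
              Real.exp (-b * x ^ 2) := by
            apply mul_le_mul_of_nonneg_right _ hexp0.le
            linarith
        _ = Real.exp (-b * x ^ 2) + (m.factorial : ℝ) / (b / 2) ^ m *
              (Real.exp (b / 2 * x ^ 2) * Real.exp (-b * x ^ 2)) := by ring
        _ = Real.exp (-b * x ^ 2) + (m.factorial : ℝ) / (b / 2) ^ m *
              Real.exp (-(b / 2) * x ^ 2) := by rw [hee]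
        _ ≤ Real.exp (-(b / 2) * x ^ 2) + (m.factorial : ℝ) / (b / 2) ^ m *
              Real.exp (-(b / 2) * x ^ 2) := by linarith
        _ = C * Real.exp (-(b / 2) * x ^ 2) := by rw [hC]; ring
    calc ‖x ^ m * Real.exp (-b * x ^ 2)‖ = |x| ^ m * Real.exp (-b * x ^ 2) := by
          rw [norm_mul, Real.norm_eq_abs, Real.norm_eq_abs, abs_pow,
            abs_of_pos hexp0]
      _ ≤ C * Real.exp (-(b / 2) * x ^ 2) := key
  have hint : Integrable (fun x : ℝ => C * Real.exp (-(b / 2) * x ^ 2)) :=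
    (integrable_exp_neg_mul_sq hb2).const_mul C
  refine hint.mono' ?_ (Filter.Eventually.of_forall hbound)
  exact ((continuous_pow m).mul
    (Real.continuous_exp.comp (by continuity))).aestronglyMeasurable

/-! ### Moments of the Gaussian measure -/

lemma gaussianPDF_toNNReal (v : ℝ≥0) (hv : v ≠ 0) :
    gaussianReal 0 v
      = MeasureTheory.volume.withDensity
          fun x => ((Real.toNNReal (gaussianPDFReal 0 v x) : ℝ≥0) : ℝ≥0∞) := by
  rw [gaussianReal_of_var_ne_zero _ hv]
  rfl

lemma gaussianPDFReal_eq (v : ℝ≥0) (x : ℝ) :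
    gaussianPDFReal 0 v x
      = (Real.sqrt (2 * Real.pi * v))⁻¹ *
          Real.exp (-(2 * (v : ℝ))⁻¹ * x ^ 2) := by
  rw [gaussianPDFReal]
  congr 1
  rw [sub_zero, neg_div, div_eq_inv_mul, neg_mul]

lemma integrable_pow_gaussian (v : ℝ≥0) (hv : v ≠ 0) (m : ℕ) :
    Integrable (fun x : ℝ => x ^ m) (gaussianReal 0 v) := by
  have hvpos : (0 : ℝ) < (v : ℝ) := by positivity
  rw [gaussianPDF_toNNReal v hv]
  rw [integrable_withDensity_iff (by
      exact (measurable_gaussianPDFReal 0 v).real_toNNReal.coe_nnreal_ennreal)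
    (Filter.Eventually.of_forall fun x => ENNReal.coe_lt_top)]
  have heq : ∀ x : ℝ, x ^ m * ((Real.toNNReal (gaussianPDFReal 0 v x) : ℝ≥0) : ℝ≥0∞).toReal
      = (Real.sqrt (2 * Real.pi * v))⁻¹ *
          (x ^ m * Real.exp (-(2 * (v : ℝ))⁻¹ * x ^ 2)) := by
    intro x
    rw [ENNReal.coe_toReal, Real.coe_toNNReal _ (gaussianPDFReal_nonneg 0 v x),
      gaussianPDFReal_eq]
    ring
  simp only [heq]
  exact (integrable_pow_mul_exp_neg_mul_sq' (by positivity) m).const_mul _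

lemma integral_id_gaussian (v : ℝ≥0) (hv : v ≠ 0) :
    ∫ x, x ∂(gaussianReal 0 v) = 0 := by
  have hmap : (gaussianReal 0 v).map (fun x : ℝ => -1 * x) = gaussianReal 0 v := by
    have h := gaussianReal_map_const_mul (μ := 0) (v := v) (-1)
    norm_num at h
    convert h using 2
    ext x
    ring
  have hmeas : Measurable fun x : ℝ => -1 * x := (measurable_id.const_mul (-1))
  have h := integral_map (μ := gaussianReal 0 v) hmeas.aemeasurable
    (f := fun x : ℝ => x) measurable_id.aestronglyMeasurable
  rw [hmap] at h
  rw [integral_const_mul] at h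
  linarith [h]

lemma integral_sq_gaussian (v : ℝ≥0) (hv : v ≠ 0) :
    ∫ x, x ^ 2 ∂(gaussianReal 0 v) = (v : ℝ) := by
  have hvpos : (0 : ℝ) < (v : ℝ) := by positivity
  set b : ℝ := (2 * (v : ℝ))⁻¹ with hb
  have h2v : (0 : ℝ) < 2 * (v : ℝ) := by positivity
  have hbpos : 0 < b := by positivity
  rw [gaussianPDF_toNNReal v hv,
    integral_withDensity_eq_integral_smul (measurable_gaussianPDFReal 0 v).real_toNNReal]
  have heq : ∀ x : ℝ, Real.toNNReal (gaussianPDFReal 0 v x) • x ^ 2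
      = (Real.sqrt (2 * Real.pi * v))⁻¹ * (x ^ 2 * Real.exp (-b * x ^ 2)) := by
    intro x
    rw [NNReal.smul_def, smul_eq_mul, Real.coe_toNNReal _ (gaussianPDFReal_nonneg 0 v x),
      gaussianPDFReal_eq]
    ring
  simp only [heq]
  rw [integral_const_mul]
  have h2 : ∫ x : ℝ, x ^ 2 * Real.exp (-b * x ^ 2)
      = 2 * ∫ x in Set.Ioi (0 : ℝ), x ^ 2 * Real.exp (-b * x ^ 2) := by
    rw [← integral_comp_abs (f := fun t : ℝ => t ^ 2 * Real.exp (-b * t ^ 2))]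
    simp only [sq_abs]
  have h3 : ∫ x in Set.Ioi (0 : ℝ), x ^ 2 * Real.exp (-b * x ^ 2)
      = ∫ x in Set.Ioi (0 : ℝ), x ^ (2 : ℝ) * Real.exp (-b * x ^ (2 : ℝ)) := by
    refine setIntegral_congr_fun measurableSet_Ioi (fun x _ => ?_)
    rw [show ((2 : ℝ)) = ((2 : ℕ) : ℝ) by norm_num, Real.rpow_natCast]
  have h4 := integral_rpow_mul_exp_neg_mul_rpow (p := 2) (q := 2) (b := b)
    (by norm_num) (by norm_num) hbpos
  have hG : Real.Gamma (((2 : ℝ) + 1) / 2) = Real.sqrt Real.pi / 2 := by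
    rw [show ((2 : ℝ) + 1) / 2 = 1 / 2 + 1 by norm_num,
      Real.Gamma_add_one (by norm_num), Real.Gamma_one_half_eq]
    ring
  have hbr : b ^ (-((2 : ℝ) + 1) / 2) = (2 * (v : ℝ)) * Real.sqrt (2 * (v : ℝ)) := by
    rw [hb, Real.inv_rpow h2v.le, ← Real.rpow_neg h2v.le, neg_div, neg_neg]
    rw [show ((2 : ℝ) + 1) / 2 = 1 + 1 / 2 by norm_num, Real.rpow_add h2v, Real.rpow_one,
      ← Real.sqrt_eq_rpow]
  rw [h2, h3, h4, hbr, hG]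
  have hsplit : Real.sqrt (2 * Real.pi * (v : ℝ))
      = Real.sqrt Real.pi * Real.sqrt (2 * (v : ℝ)) := by
    rw [← Real.sqrt_mul Real.pi_pos.le]
    congr 1
    ring
  rw [hsplit]
  have hs : 0 < Real.sqrt (2 * (v : ℝ)) := Real.sqrt_pos.mpr h2v
  have hp : 0 < Real.sqrt Real.pi := Real.sqrt_pos.mpr Real.pi_pos
  field_simp

/-! ### Products over pi measures -/

lemma integrable_pi_prod {ι : Type*} [Fintype ι] {E : Type*} [MeasurableSpace E]
    (μ : ι → Measure E) [h : ∀ i, SigmaFinite (μ i)] (f : ι → E → ℝ)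
    (hf : ∀ i, Integrable (f i) (μ i)) :
    Integrable (fun x : ι → E => ∏ i, f i (x i)) (Measure.pi μ) := by
  exact MeasureTheory.Integrable.fintype_prod_dep (μ := μ) hf

lemma integral_pi_prod {ι : Type*} [Fintype ι] {E : Type*} [MeasurableSpace E]
    (μ : ι → Measure E) [h : ∀ i, SigmaFinite (μ i)] (f : ι → E → ℝ) :
    ∫ x : ι → E, ∏ i, f i (x i) ∂(Measure.pi μ) = ∏ i, ∫ t, f i t ∂(μ i) := by
  exact MeasureTheory.integral_fintype_prod_eq_prod (μ := μ) f

/-! ### Second moments of a vector of iid gaussians -/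

/-- the coordinate-factor function used to express `y a * y b` as a product over
coordinates. -/
private def cf {n : ℕ} (a b l : Fin n) : ℝ → ℝ :=
  fun t => (if l = a then t else 1) * (if l = b then t else 1)

lemma cf_prod {n : ℕ} (a b : Fin n) (y : Fin n → ℝ) :
    ∏ l, cf a b l (y l) = y a * y b := by
  unfold cf
  rw [Finset.prod_mul_distrib]
  congr 1
  · rw [Finset.prod_ite_eq' Finset.univ a (fun l => y l)]
    simp
  · rw [Finset.prod_ite_eq' Finset.univ b (fun l => y l)]
    simp

lemma cf_eq_pow {n : ℕ} (a b l : Fin n) :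
    cf a b l = fun t : ℝ =>
      t ^ ((if l = a then 1 else 0) + (if l = b then 1 else 0)) := by
  funext t
  unfold cf
  rw [pow_add]
  congr 1 <;> split_ifs <;> simp

lemma cf_integrable {n : ℕ} (v : ℝ≥0) (hv : v ≠ 0) (a b l : Fin n) :
    Integrable (cf a b l) (gaussianReal 0 v) := by
  rw [cf_eq_pow]
  exact integrable_pow_gaussian v hv _

lemma cf_integral {n : ℕ} (v : ℝ≥0) (hv : v ≠ 0) (a b l : Fin n) :
    ∫ t, cf a b l t ∂(gaussianReal 0 v)
      = if l = a then (if l = b then (v : ℝ) else 0)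
        else (if l = b then 0 else 1) := by
  rw [cf_eq_pow]
  split_ifs with h1 h2 h3
  · have := integral_sq_gaussian v hv
    simpa [show (1 + 1 : ℕ) = 2 by norm_num] using this
  · simpa using integral_id_gaussian v hv
  · simpa using integral_id_gaussian v hv
  · simp

lemma integrable_eval_mul_eval {n : ℕ} (v : ℝ≥0) (hv : v ≠ 0) (a b : Fin n) :
    Integrable (fun y : Fin n → ℝ => y a * y b)
      (Measure.pi fun _ : Fin n => gaussianReal 0 v) := by
  have := integrable_pi_prod (fun _ : Fin n => gaussianReal 0 v) (cf a b)
    (fun l => cf_integrable v hv a b l)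
  simpa only [cf_prod] using this

lemma integral_eval_mul_eval {n : ℕ} (v : ℝ≥0) (hv : v ≠ 0) (a b : Fin n) :
    ∫ y : Fin n → ℝ, y a * y b ∂(Measure.pi fun _ : Fin n => gaussianReal 0 v)
      = if a = b then (v : ℝ) else 0 := by
  have h := integral_pi_prod (fun _ : Fin n => gaussianReal 0 v) (cf a b)
  simp only [cf_prod] at h
  rw [h]
  simp only [cf_integral v hv a b]
  by_cases hab : a = b
  · subst hab
    rw [if_pos rfl]
    have hstep : ∀ l ∈ (Finset.univ : Finset (Fin n)),
        (if l = a then (if l = a then (v : ℝ) else 0) else (if l = a then 0 else 1))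
          = (if l = a then (v : ℝ) else 1) := by
      intro l _
      split_ifs <;> rfl
    rw [Finset.prod_congr rfl hstep, Finset.prod_ite_eq' Finset.univ a (fun _ => (v : ℝ))]
    simp
  · rw [if_neg hab]
    apply Finset.prod_eq_zero (Finset.mem_univ a)
    simp [hab]

/-! ### The sign-sum over the stabilizer of `f` -/

lemma sign_sum_stabilizer {k n : ℕ} (f : Fin k → Fin n) :
    (∑ σ : Equiv.Perm (Fin k),
        if f ∘ ⇑σ = f then ((Equiv.Perm.sign σ : ℤ) : ℝ) else 0)
      = if Function.Injective f then 1 else 0 := by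
  classical
  by_cases hf : Function.Injective f
  · rw [if_pos hf]
    rw [Finset.sum_eq_single (1 : Equiv.Perm (Fin k))]
    · simp
    · intro σ _ hσ
      rw [if_neg]
      intro h
      apply hσ
      apply Equiv.ext
      intro i
      have := hf (congrFun h i)
      simpa using this
    · simp
  · rw [if_neg hf]
    simp only [Function.Injective, not_forall] at hf
    obtain ⟨i, j, hfij, hij⟩ := hf
    have hswap : f ∘ ⇑(Equiv.swap i j) = f := by
      funext x
      simp only [Function.comp_apply]
      rcases eq_or_ne x i with rfl | hxi
      · rw [Equiv.swap_apply_left]; exact hfij.symm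
      rcases eq_or_ne x j with rfl | hxj
      · rw [Equiv.swap_apply_right]; exact hfij
      · rw [Equiv.swap_apply_of_ne_of_ne hxi hxj]
    refine Finset.sum_ninvolution (fun σ => σ * Equiv.swap i j) ?_ ?_
      (fun _ => Finset.mem_univ _) ?_
    · intro σ
      have hcond : (f ∘ ⇑(σ * Equiv.swap i j) = f) ↔ (f ∘ ⇑σ = f) := by
        constructor
        · intro h
          funext x
          have hx := congrFun h (Equiv.swap i j x)
          have hs := congrFun hswap x
          simp only [Function.comp_apply, Equiv.Perm.coe_mul,
            Equiv.swap_apply_self] at hx hs ⊢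
          rw [hx, hs]
        · intro h
          funext x
          have h1 := congrFun h (Equiv.swap i j x)
          have hs := congrFun hswap x
          simp only [Function.comp_apply, Equiv.Perm.coe_mul] at h1 hs ⊢
          rw [h1, hs]
      by_cases h : f ∘ ⇑σ = f
      · rw [if_pos h, if_pos (hcond.mpr h)]
        have hsgn : Equiv.Perm.sign (σ * Equiv.swap i j) = -Equiv.Perm.sign σ := by
          rw [Equiv.Perm.sign_mul, Equiv.Perm.sign_swap hij, mul_neg_one]
        rw [hsgn]
        push_cast
        ring
      · rw [if_neg h, if_neg (fun hc => h (hcond.mp hc))]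
        ring
    · intro σ _
      intro h
      have h' : σ * Equiv.swap i j = σ * 1 := by rw [mul_one]; exact h
      exact hij (Equiv.swap_eq_one_iff.mp (mul_left_cancel h'))
    · intro σ
      show σ * Equiv.swap i j * Equiv.swap i j = σ
      rw [mul_assoc, Equiv.swap_mul_self, mul_one]

lemma card_injective_eq {k n : ℕ} :
    ((Finset.univ : Finset (Fin k → Fin n)).filter Function.Injective).card
      = n.descFactorial k := by
  classical
  rw [← Fintype.card_subtype]
  rw [Fintype.card_congr (Equiv.subtypeInjectiveEquivEmbedding (Fin k) (Fin n))]
  rw [Fintype.card_embedding_eq, Fintype.card_fin, Fintype.card_fin]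

end GramDetAux

open GramDetAux

/-- **Lemma 5.3 (expected squared volume of a Gaussian parallelotope).** Let `u₁, …, u_k` be
independent random vectors in `ℝⁿ` (`k ≤ n`), `uᵢ` centered Gaussian with covariance matrix
`αᵢ² Iₙ`.  Then the expected determinant of the Gram matrix `(⟨uᵢ, uⱼ⟩)ᵢⱼ` — the expected
squared `k`-dimensional volume of the parallelotope spanned by `u₁, …, u_k` — equals
`(n!/(n-k)!) ∏ᵢ αᵢ²`. -/
theorem expected_gram_determinant_of_isotropic_gaussians
    (k n : ℕ) (hkn : k ≤ n)
    {Ω : Type*} [MeasurableSpace Ω] (P : Measure Ω) [IsProbabilityMeasure P]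
    (u : Fin k → Ω → (Fin n → ℝ))
    (hmeas : ∀ i, Measurable (u i))
    -- the vectors are independent
    (hindep : iIndepFun u P)
    -- each `uᵢ` has independent centered Gaussian coordinates of variance `αᵢ²`
    (α : Fin k → ℝ≥0) (hα : ∀ i, 0 < α i)
    (hlaw : ∀ i, Measure.map (u i) P = Measure.pi fun _ : Fin n => gaussianReal 0 (α i ^ 2)) :
    ∫ ω, (Matrix.of fun i j : Fin k => ∑ l, u i ω l * u j ω l).det ∂P =
      (n.descFactorial k : ℝ) * ∏ i, (α i : ℝ) ^ 2 := by
  classical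
  set μs : Fin k → Measure (Fin n → ℝ) :=
    fun i => Measure.pi fun _ : Fin n => gaussianReal 0 (α i ^ 2) with hμs
  have hαv : ∀ i, (α i ^ 2 : ℝ≥0) ≠ 0 := fun i => by
    have := (hα i).ne'
    positivity
  haveI : ∀ i, IsProbabilityMeasure (μs i) := fun i => by
    rw [hμs]; infer_instance
  set ν : Measure (Fin k → Fin n → ℝ) := Measure.pi μs with hν
  set F : Ω → (Fin k → Fin n → ℝ) := fun ω i => u i ω with hF
  have hFmeas : Measurable F := measurable_pi_lambda _ hmeas
  set G : (Fin k → Fin n → ℝ) → ℝ :=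
    fun x => (Matrix.of fun i j : Fin k => ∑ l, x i l * x j l).det with hG
  have hGcont : Continuous G := by
    have hent : ∀ i j : Fin k,
        Continuous fun x : Fin k → Fin n → ℝ => ∑ l, x i l * x j l := fun i j =>
      continuous_finset_sum _ fun l _ =>
        by fun_prop
    exact Continuous.matrix_det (continuous_matrix fun i j => hent i j)
  -- Step 1 : the law of `F` is the product measure `ν`
  have hmap : Measure.map F P = ν := by
    rw [hν]
    refine (Measure.pi_eq fun s hs => ?_).symm
    rw [Measure.map_apply hFmeas (MeasurableSet.univ_pi hs)]
    have hpre : F ⁻¹' Set.pi Set.univ s = ⋂ i ∈ Finset.univ, u i ⁻¹' s i := by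
      ext ω
      simp [hF, Set.mem_pi]
    rw [hpre, hindep.measure_inter_preimage_eq_mul Finset.univ (fun i _ => hs i)]
    refine Finset.prod_congr rfl fun i _ => ?_
    rw [← Measure.map_apply (hmeas i) (hs i), hlaw i]
  -- Step 2 : change of variables
  have hchg : ∫ ω, G (F ω) ∂P = ∫ x, G x ∂ν := by
    rw [← hmap]
    exact (integral_map hFmeas.aemeasurable hGcont.aestronglyMeasurable).symm
  have hgoal1 : (∫ ω, (Matrix.of fun i j : Fin k => ∑ l, u i ω l * u j ω l).det ∂P)
      = ∫ x, G x ∂ν := by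
    rw [← hchg]
  rw [hgoal1]
  -- Step 3 : pointwise expansion of the determinant
  have hpoint : ∀ x : Fin k → Fin n → ℝ,
      G x = ∑ σ : Equiv.Perm (Fin k), ∑ f : Fin k → Fin n,
        ((Equiv.Perm.sign σ : ℤ) : ℝ) * ∏ i, (x i (f i) * x i (f (σ⁻¹ i))) := by
    intro x
    simp only [hG]
    rw [Matrix.det_apply']
    refine Finset.sum_congr rfl fun σ _ => ?_
    have h1 : ∏ i, (Matrix.of fun i j : Fin k => ∑ l, x i l * x j l) (σ i) i
        = ∑ f : Fin k → Fin n, ∏ i, (x (σ i) (f i) * x i (f i)) := by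
      simp only [Matrix.of_apply]
      rw [Fintype.prod_sum (fun i l => x (σ i) l * x i l)]
    rw [h1, Finset.mul_sum]
    refine Finset.sum_congr rfl fun f _ => ?_
    congr 1
    have h2 : ∏ i, x (σ i) (f i) = ∏ i, x i (f (σ⁻¹ i)) := by
      have := Equiv.prod_comp σ (fun j => x j (f (σ⁻¹ j)))
      simp only [Equiv.Perm.coe_inv, Equiv.symm_apply_apply] at this
      exact this
    rw [Finset.prod_mul_distrib, h2, ← Finset.prod_mul_distrib]
    refine Finset.prod_congr rfl fun i _ => ?_
    ring
  -- Step 4 : integrability of each term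
  have hint : ∀ (σ : Equiv.Perm (Fin k)) (f : Fin k → Fin n),
      Integrable (fun x : Fin k → Fin n → ℝ =>
        ((Equiv.Perm.sign σ : ℤ) : ℝ) * ∏ i, (x i (f i) * x i (f (σ⁻¹ i)))) ν := by
    intro σ f
    refine Integrable.const_mul ?_ _
    exact integrable_pi_prod μs
      (fun i => fun y : Fin n → ℝ => y (f i) * y (f (σ⁻¹ i)))
      (fun i => integrable_eval_mul_eval _ (hαv i) _ _)
  -- Step 5 : compute
  calc ∫ x, G x ∂ν
      = ∫ x, ∑ σ : Equiv.Perm (Fin k), ∑ f : Fin k → Fin n,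
          ((Equiv.Perm.sign σ : ℤ) : ℝ) * ∏ i, (x i (f i) * x i (f (σ⁻¹ i))) ∂ν := by
        refine integral_congr_ae (Filter.Eventually.of_forall fun x => ?_)
        exact hpoint x
    _ = ∑ σ : Equiv.Perm (Fin k), ∑ f : Fin k → Fin n,
          ∫ x, ((Equiv.Perm.sign σ : ℤ) : ℝ) *
            ∏ i, (x i (f i) * x i (f (σ⁻¹ i))) ∂ν := by
        rw [integral_finset_sum _ fun σ _ => integrable_finset_sum _ fun f _ => hint σ f]
        exact Finset.sum_congr rfl fun σ _ =>
          integral_finset_sum _ fun f _ => hint σ f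
    _ = ∑ σ : Equiv.Perm (Fin k), ∑ f : Fin k → Fin n,
          ((Equiv.Perm.sign σ : ℤ) : ℝ) *
            ∏ i, (if f i = f (σ⁻¹ i) then ((α i : ℝ)) ^ 2 else 0) := by
        refine Finset.sum_congr rfl fun σ _ => Finset.sum_congr rfl fun f _ => ?_
        rw [integral_const_mul]
        congr 1
        rw [integral_pi_prod μs (fun i => fun y : Fin n → ℝ => y (f i) * y (f (σ⁻¹ i)))]
        refine Finset.prod_congr rfl fun i _ => ?_
        rw [hμs]
        rw [integral_eval_mul_eval _ (hαv i) (f i) (f (σ⁻¹ i))]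
        by_cases h : f i = f (σ⁻¹ i)
        · rw [if_pos h, if_pos h]; push_cast; ring
        · rw [if_neg h, if_neg h]
    _ = ∑ σ : Equiv.Perm (Fin k), ∑ f : Fin k → Fin n,
          (if f ∘ ⇑σ = f then ((Equiv.Perm.sign σ : ℤ) : ℝ) else 0) *
            ∏ i, (α i : ℝ) ^ 2 := by
        refine Finset.sum_congr rfl fun σ _ => Finset.sum_congr rfl fun f _ => ?_
        rw [Finset.prod_ite_zero]
        have hcond : (∀ i ∈ Finset.univ, f i = f (σ⁻¹ i)) ↔ f ∘ ⇑σ = f := by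
          constructor
          · intro h
            funext j
            have := h (σ j) (Finset.mem_univ _)
            simpa [Equiv.Perm.coe_inv, Equiv.symm_apply_apply] using this
          · intro h i _
            have := congrFun h (σ⁻¹ i)
            simpa [Equiv.Perm.coe_inv, Equiv.apply_symm_apply] using this
        by_cases h : f ∘ ⇑σ = f
        · rw [if_pos (hcond.mpr h), if_pos h]
        · rw [if_neg (fun hc => h (hcond.mp hc)), if_neg h]
          ring
    _ = ∑ f : Fin k → Fin n,
          (∑ σ : Equiv.Perm (Fin k),
            if f ∘ ⇑σ = f then ((Equiv.Perm.sign σ : ℤ) : ℝ) else 0) *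
            ∏ i, (α i : ℝ) ^ 2 := by
        rw [Finset.sum_comm]
        exact Finset.sum_congr rfl fun f _ => (Finset.sum_mul _ _ _).symm
    _ = ∑ f : Fin k → Fin n,
          (if Function.Injective f then (1 : ℝ) else 0) * ∏ i, (α i : ℝ) ^ 2 := by
        refine Finset.sum_congr rfl fun f _ => ?_
        rw [sign_sum_stabilizer f]
    _ = (n.descFactorial k : ℝ) * ∏ i, (α i : ℝ) ^ 2 := by
        rw [← Finset.sum_mul]
        congr 1
        rw [Finset.sum_boole]
        rw [card_injective_eq]
end
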